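/- Let S be compact with ∂S ≠ ∅, let A be a closed set with ℵ ⊂ A ⊂ S for a finite set ℵ with d_H(ℵ,S) = ε, and suppose S ⊖ kεB(0,1) ⊂ A ⊂ S for some constant k ≥ 1. Then d_H(∂S, ∂A) ≤ kε. -/

import Mathlib

open MeasureTheory Metric Set Filter

noncomputable section

/-- The open finite cone with vertex `x`, axis `ξ`, opening angle `ρ` and height `h`. -/
def fcone (d : ℕ) (ρ h : ℝ) (x ξ : EuclideanSpace ℝ (Fin d)) :
    Set (EuclideanSpace ℝ (Fin d)) :=
  {z | z ≠ x ∧ (inner ℝ ξ (‖z - x‖⁻¹ • (z - x)) : ℝ) > Real.cos (ρ / 2)} ∩ Metric.ball x h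

/-- `S` is `ρ,h`-cone-convex. -/
def ConeConvex (d : ℕ) (ρ h : ℝ) (S : Set (EuclideanSpace ℝ (Fin d))) : Prop :=
  ∀ x ∈ frontier S, ∃ ξ : EuclideanSpace ℝ (Fin d), ‖ξ‖ = 1 ∧ fcone d ρ h x ξ ⊆ Sᶜ

/-- The `ρ,h`-cone-convex hull by complement. -/
def cccHull (d : ℕ) (ρ h : ℝ) (S : Set (EuclideanSpace ℝ (Fin d))) :
    Set (EuclideanSpace ℝ (Fin d)) :=
  ⋂₀ {A | ∃ y ξ : EuclideanSpace ℝ (Fin d),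
      ‖ξ‖ = 1 ∧ fcone d ρ h y ξ ∩ S = ∅ ∧ A = (fcone d ρ h y ξ)ᶜ}

/-- The `ρ,h`-cone-convex hull: intersection of all compact `ρ,h`-cone-convex supersets. -/
def ccHull (d : ℕ) (ρ h : ℝ) (S : Set (EuclideanSpace ℝ (Fin d))) :
    Set (EuclideanSpace ℝ (Fin d)) :=
  ⋂₀ {B | S ⊆ B ∧ IsCompact B ∧ B.Nonempty ∧ ConeConvex d ρ h B}

/-- A preconnected set meeting both a set and its complement meets the frontier. -/
lemma preconn_inter_frontier {X : Type*} [TopologicalSpace X] {t s : Set X}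
    (ht : IsPreconnected t) (h1 : (t ∩ s).Nonempty) (h2 : (t \ s).Nonempty) :
    (t ∩ frontier s).Nonempty := by
  by_contra h
  rw [Set.not_nonempty_iff_eq_empty] at h
  have hfr : ∀ x ∈ t, x ∉ frontier s := by
    intro x hx hxf
    have hmem : x ∈ t ∩ frontier s := ⟨hx, hxf⟩
    rw [h] at hmem
    exact hmem
  have hsub : t ⊆ interior s ∪ (closure s)ᶜ := by
    intro x hx
    by_cases hxs : x ∈ closure s
    · by_cases hxi : x ∈ interior s
      · exact Or.inl hxi
      · exact absurd ⟨hxs, hxi⟩ (hfr x hx)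
    · exact Or.inr hxs
  have hu : (t ∩ interior s).Nonempty := by
    obtain ⟨x, hxt, hxs⟩ := h1
    refine ⟨x, hxt, ?_⟩
    by_contra hxi
    exact hfr x hxt ⟨subset_closure hxs, hxi⟩
  have hv : (t ∩ (closure s)ᶜ).Nonempty := by
    obtain ⟨x, hxt, hxs⟩ := h2
    refine ⟨x, hxt, ?_⟩
    intro hxc
    exact hfr x hxt ⟨hxc, fun hxi => hxs (interior_subset hxi)⟩
  obtain ⟨x, hxt, hxi, hxc⟩ := ht (interior s) (closure s)ᶜ isOpen_interior
    isClosed_closure.isOpen_compl hsub hu hv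
  exact hxc (subset_closure (interior_subset hxi))

/-- The segment from a point of `T` to a point outside `T` meets the frontier of `T`. -/
lemma segment_meets_frontier {E : Type*} [NormedAddCommGroup E] [NormedSpace ℝ E]
    {T : Set E} {a b : E} (ha : a ∈ T) (hb : b ∉ T) :
    ∃ p ∈ frontier T, dist a p ≤ dist a b ∧ dist b p ≤ dist a b := by
  obtain ⟨p, hpseg, hpf⟩ := preconn_inter_frontier (convex_segment a b).isPreconnected
    ⟨a, left_mem_segment ℝ a b, ha⟩ ⟨b, right_mem_segment ℝ a b, hb⟩
  have h1 : p ∈ Metric.closedBall a (dist a b) :=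
    (convex_closedBall a (dist a b)).segment_subset (Metric.mem_closedBall_self dist_nonneg)
      (by simp [Metric.mem_closedBall, dist_comm b a]) hpseg
  have h2 : p ∈ Metric.closedBall b (dist a b) :=
    (convex_closedBall b (dist a b)).segment_subset
      (Metric.mem_closedBall.mpr le_rfl) (Metric.mem_closedBall_self dist_nonneg) hpseg
  exact ⟨p, hpf, by simpa [dist_comm] using Metric.mem_closedBall.mp h1,
    by simpa [dist_comm] using Metric.mem_closedBall.mp h2⟩

theorem stmt_14 {d : ℕ} (S A N : Set (EuclideanSpace ℝ (Fin d)))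
    (hS : IsCompact S) (hfr : (frontier S).Nonempty) (hA : IsClosed A)
    (hN : N.Finite) (hNne : N.Nonempty) (hNA : N ⊆ A) (hAS : A ⊆ S)
    (ε k : ℝ) (hε : ε = Metric.hausdorffDist N S) (hk : 1 ≤ k)
    (hero : {x ∈ S | Metric.closedBall x (k * ε) ⊆ S} ⊆ A) :
    Metric.hausdorffDist (frontier S) (frontier A) ≤ k * ε := by
  have hε0 : 0 ≤ ε := hε ▸ Metric.hausdorffDist_nonneg
  have hkε0 : 0 ≤ k * ε := mul_nonneg (zero_le_one.trans hk) hε0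
  have hεkε : ε ≤ k * ε := le_mul_of_one_le_left hε0 hk
  have hSc : IsClosed S := hS.isClosed
  have hSne : S.Nonempty := hNne.mono (hNA.trans hAS)
  have hedist : EMetric.hausdorffEdist S N ≠ ⊤ :=
    Metric.hausdorffEdist_ne_top_of_nonempty_of_bounded hSne hNne hS.isBounded hN.isBounded
  apply Metric.hausdorffDist_le_of_infDist hkε0
  · -- points of frontier S are close to frontier A
    intro x hx
    have hxS : x ∈ S := by
      have := hx.1
      rwa [hSc.closure_eq] at this
    have hinf : Metric.infDist x N ≤ ε := by
      rw [hε, Metric.hausdorffDist_comm]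
      exact Metric.infDist_le_hausdorffDist_of_mem hxS hedist
    obtain ⟨n, hnN, hdn⟩ := hN.isCompact.exists_infDist_eq_dist hNne x
    have hdxn : dist x n ≤ ε := hdn ▸ hinf
    by_cases hxA : x ∈ A
    · have hxfA : x ∈ frontier A := by
        refine ⟨subset_closure hxA, fun hxi => hx.2 ?_⟩
        exact interior_mono hAS hxi
      calc Metric.infDist x (frontier A) = 0 := Metric.infDist_zero_of_mem hxfA
        _ ≤ k * ε := hkε0
    · obtain ⟨p, hpf, _, hpd⟩ := segment_meets_frontier (hNA hnN) hxA
      calc Metric.infDist x (frontier A) ≤ dist x p := Metric.infDist_le_dist_of_mem hpf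
        _ ≤ dist n x := hpd
        _ = dist x n := dist_comm n x
        _ ≤ k * ε := hdxn.trans hεkε
  · -- points of frontier A are close to frontier S
    intro x hx
    have hxA : x ∈ A := by
      have := hx.1
      rwa [hA.closure_eq] at this
    have hxS : x ∈ S := hAS hxA
    refine le_of_forall_pos_le_add fun δ hδ => ?_
    by_cases hball : Metric.ball x (k * ε + δ) ⊆ S
    · exfalso
      have hballA : Metric.ball x δ ⊆ A := by
        intro y hy
        apply hero
        have hyS : y ∈ S := hball (by
          rw [Metric.mem_ball] at hy ⊢
          linarith [Metric.mem_ball.mp hy])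
        refine ⟨hyS, fun z hz => hball ?_⟩
        rw [Metric.mem_ball]
        calc dist z x ≤ dist z y + dist y x := dist_triangle z y x
          _ < k * ε + δ := by
              have h1 : dist z y ≤ k * ε := Metric.mem_closedBall.mp hz
              have h2 : dist y x < δ := Metric.mem_ball.mp hy
              linarith
      exact hx.2 (mem_interior.mpr ⟨Metric.ball x δ, hballA, Metric.isOpen_ball,
        Metric.mem_ball_self hδ⟩)
    · obtain ⟨z, hz, hzS⟩ := not_subset.mp hball
      obtain ⟨p, hpf, hpd, _⟩ := segment_meets_frontier hxS hzS
      calc Metric.infDist x (frontier S) ≤ dist x p := Metric.infDist_le_dist_of_mem hpf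
        _ ≤ dist x z := hpd
        _ ≤ k * ε + δ := by
              rw [dist_comm]; exact (Metric.mem_ball.mp hz).le
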